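/- Let (𝐬, r(𝐬)) ∈ 𝒮 with 𝐬 = ([i_1,j_1],…,[i_r,j_r]) and r(𝐬) = (1, r_1, …, r_k). (a) Let 1 ≤ p < p′ ≤ r and let 0 ≤ m < ℓ ≤ k be such that r_m ≤ p < r_{m+1} and r_{ℓ−1} < p′ ≤ r_ℓ. Then 𝐬(p,p′), together with the r-vector given by the strictly increasing sequence with entries 1, r_{m+1}−p, …, r_{ℓ−1}−p, p′−p (entries equal to an adjacent one being omitted), is an alternating snake; similarly for p = 0, the prefix 𝐬(0,p′) with r-vector (1, r_1, …, r_{ℓ−1}, p′) is an alternating snake. (b) 𝐬 is connected (respectively prime, stable) if and only if 𝐬(p,p′) is connected (respectively prime, stable) for all 0 ≤ p < p′ ≤ r. -/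
import Mathlib


namespace AltSnakePaper

/-- `[i,j] ∈ 𝕀ₙ`: the interval condition `0 ≤ j - i ≤ n + 1`. -/
def InIn (n : ℕ) (i j : ℤ) : Prop := 0 ≤ j - i ∧ j - i ≤ (n : ℤ) + 1

/-- The intervals `[i1,j1]` and `[i2,j2]` overlap. -/
def Overlap (i1 j1 i2 j2 : ℤ) : Prop :=
  (i1 < i2 ∧ i2 ≤ j1 ∧ j1 < j2) ∨ (i2 < i1 ∧ i1 ≤ j2 ∧ j2 < j1)

/-- The pair `([i1,j1],[i2,j2])` is connected. -/
def ConnPair (n : ℕ) (i1 j1 i2 j2 : ℤ) : Prop :=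
  Overlap i1 j1 i2 j2 ∧ InIn n i1 j2 ∧ InIn n i2 j1

/-- The subtuple `𝐬(a,b)` (entries with indices `a+1, …, b`) lies in `S_→`. -/
def SRight (ii jj : ℕ → ℤ) (a b : ℕ) : Prop :=
  ∀ s, a + 1 ≤ s → s + 1 ≤ b → ii s < ii (s + 1) ∧ jj s < jj (s + 1)

/-- The subtuple `𝐬(a,b)` (entries with indices `a+1, …, b`) lies in `S_←`. -/
def SLeft (ii jj : ℕ → ℤ) (a b : ℕ) : Prop :=
  ∀ s, a + 1 ≤ s → s + 1 ≤ b → ii (s + 1) < ii s ∧ jj (s + 1) < jj s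

/-- `(𝐬, r(𝐬))` is an alternating snake, where `𝐬 = ([i_1,j_1],…,[i_r,j_r])`
(encoded by `ii jj : ℕ → ℤ`, entries indexed `1,…,r`) and
`r(𝐬) = (r_0, r_1, …, r_k)` (encoded by `rr : ℕ → ℕ`). -/
structure IsAltSnake (n r k : ℕ) (rr : ℕ → ℕ) (ii jj : ℕ → ℤ) : Prop where
  hr : 1 ≤ r
  hk : k ≤ r
  mem : ∀ s, 1 ≤ s → s ≤ r → InIn n (ii s) (jj s)
  distinct : ∀ s p, 1 ≤ s → s ≤ r → 1 ≤ p → p ≤ r → s ≠ p → ii s ≠ ii p ∨ jj s ≠ jj p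
  rr0 : rr 0 = 1
  rrk : rr k = r
  rrmono : ∀ m, m < k → rr m < rr (m + 1)
  mono : ∀ m, 1 ≤ m → m ≤ k →
      SRight ii jj (rr (m - 1) - 1) (rr m) ∨ SLeft ii jj (rr (m - 1) - 1) (rr m)
  alt : ∀ m, 1 ≤ m → m < k →
      (SRight ii jj (rr (m - 1) - 1) (rr m) ↔ SLeft ii jj (rr m - 1) (rr (m + 1)))
  nonoverlap : ∀ m s t, 1 ≤ m → m < k → 1 ≤ s → s < rr m → rr m < t → t ≤ r →
      ¬ Overlap (ii s) (jj s) (ii t) (jj t)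

/-- The subtuple `𝐬(a,b)` is connected: all consecutive pairs are connected. -/
def SegConnected (n : ℕ) (ii jj : ℕ → ℤ) (a b : ℕ) : Prop :=
  ∀ s, a + 1 ≤ s → s + 1 ≤ b → ConnPair n (ii s) (jj s) (ii (s + 1)) (jj (s + 1))

/-- The subtuple `𝐬(a,b)` (with its induced r-vector, whose internal break points
are the `rr m` with `a + 1 < rr m < b`) is prime. -/
def SegPrime (n k : ℕ) (rr : ℕ → ℕ) (ii jj : ℕ → ℤ) (a b : ℕ) : Prop :=
  SegConnected n ii jj a b ∧
    ∀ m, 1 ≤ m → m < k → a + 1 < rr m → rr m < b →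
      ii (rr m - 1) ≠ ii (rr m + 1) ∧ jj (rr m - 1) ≠ jj (rr m + 1)

/-- The subtuple `𝐬(a,b)` (with its induced r-vector) is stable. -/
def SegStable (k : ℕ) (rr : ℕ → ℕ) (ii jj : ℕ → ℤ) (a b : ℕ) : Prop :=
  ∀ m, 1 ≤ m → m < k → a + 1 < rr m → rr m < b →
    (ii (rr m + 1) < ii (rr m - 1) → jj (rr m + 1) < ii (rr m - 1)) ∧
    (jj (rr m - 1) < jj (rr m + 1) → jj (rr m - 1) < ii (rr m + 1))

/-- The alternating snake is stable. -/
def Stable (k : ℕ) (rr : ℕ → ℕ) (ii jj : ℕ → ℤ) : Prop :=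
  ∀ m, 1 ≤ m → m < k →
    (ii (rr m + 1) < ii (rr m - 1) → jj (rr m + 1) < ii (rr m - 1)) ∧
    (jj (rr m - 1) < jj (rr m + 1) → jj (rr m - 1) < ii (rr m + 1))

/-- The boundary condition allowing a cut of the snake at `p = rr m - ε`:
`a_{r_m-1} = a_{r_m+1}` for some `a ∈ {i, j}`, with `ε ∈ {0,1}` chosen so that, `b`
denoting the other member of `{i,j}`, one has `b_{r_m−1+2ε} < b_{r_m+1−2ε}` if
`𝐬(r_m−2, r_m) ∈ S_←` and `b_{r_m+1−2ε} < b_{r_m−1+2ε}` if `𝐬(r_m−2, r_m) ∈ S_→`. -/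
def BoundaryCond (k : ℕ) (rr : ℕ → ℕ) (ii jj : ℕ → ℤ) (m ε : ℕ) : Prop :=
  (ii (rr m - 1) = ii (rr m + 1) ∧
    (SLeft ii jj (rr m - 2) (rr m) → jj (rr m - 1 + 2 * ε) < jj (rr m + 1 - 2 * ε)) ∧
    (SRight ii jj (rr m - 2) (rr m) → jj (rr m + 1 - 2 * ε) < jj (rr m - 1 + 2 * ε))) ∨
  (jj (rr m - 1) = jj (rr m + 1) ∧
    (SLeft ii jj (rr m - 2) (rr m) → ii (rr m - 1 + 2 * ε) < ii (rr m + 1 - 2 * ε)) ∧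
    (SRight ii jj (rr m - 2) (rr m) → ii (rr m + 1 - 2 * ε) < ii (rr m - 1 + 2 * ε)))

/-- `p` is an admissible cut point for the prime decomposition. -/
def CutAt (n r k : ℕ) (rr : ℕ → ℕ) (ii jj : ℕ → ℤ) (p : ℕ) : Prop :=
  p = r ∨
  ¬ ConnPair n (ii p) (jj p) (ii (p + 1)) (jj (p + 1)) ∨
  ∃ m ε, 1 ≤ m ∧ m < k ∧ ε ≤ 1 ∧ p = rr m - ε ∧ BoundaryCond k rr ii jj m ε

/-- `0 = c 0 < c 1 < ⋯ < c L = r` are the cut points of a prime decomposition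
of the snake, the prime factors being the segments `𝐬(c t, c (t+1))`. -/
def IsPrimeDecomp (n r k : ℕ) (rr : ℕ → ℕ) (ii jj : ℕ → ℤ) (c : ℕ → ℕ) (L : ℕ) : Prop :=
  1 ≤ L ∧ c 0 = 0 ∧ c L = r ∧ (∀ t, t < L → c t < c (t + 1)) ∧
  (∀ t, t < L → SegPrime n k rr ii jj (c t) (c (t + 1))) ∧
  (∀ t, 1 ≤ t → t ≤ L → CutAt n r k rr ii jj (c t))

/-- The segment `𝐬(a,b)` is contained in a prime factor of `𝐬`. -/
def ContainedInPF (n r k : ℕ) (rr : ℕ → ℕ) (ii jj : ℕ → ℤ) (a b : ℕ) : Prop :=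
  ∃ c L t, IsPrimeDecomp n r k rr ii jj c L ∧ t < L ∧ c t ≤ a ∧ b ≤ c (t + 1)



private lemma rr_mono_aux (k : ℕ) (rr : ℕ → ℕ)
    (hm : ∀ m, m < k → rr m < rr (m + 1)) :
    ∀ v, v ≤ k → ∀ u, u ≤ v → rr u + (v - u) ≤ rr v := by
  intro v
  induction v with
  | zero =>
    intro _ u hu
    obtain rfl : u = 0 := Nat.le_zero.mp hu
    omega
  | succ w ih =>
    intro hv u hu
    by_cases hw : u = w + 1
    · subst hw; omega
    · have h1 := ih (by omega) u (by omega)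
      have h2 := hm w (by omega)
      omega

private lemma sRight_shift (ii jj : ℕ → ℤ) (p A B : ℕ) :
    SRight (fun s => ii (p + s)) (fun s => jj (p + s)) A B ↔ SRight ii jj (p + A) (p + B) := by
  constructor
  · intro H s hs1 hs2
    have := H (s - p) (by omega) (by omega)
    simpa only [show p + (s - p) = s by omega, show p + (s - p + 1) = s + 1 by omega] using this
  · intro H s hs1 hs2
    have := H (p + s) (by omega) (by omega)
    simpa only [show p + s + 1 = p + (s + 1) by omega] using this

private lemma sLeft_shift (ii jj : ℕ → ℤ) (p A B : ℕ) :
    SLeft (fun s => ii (p + s)) (fun s => jj (p + s)) A B ↔ SLeft ii jj (p + A) (p + B) := by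
  constructor
  · intro H s hs1 hs2
    have := H (s - p) (by omega) (by omega)
    simpa only [show p + (s - p) = s by omega, show p + (s - p + 1) = s + 1 by omega] using this
  · intro H s hs1 hs2
    have := H (p + s) (by omega) (by omega)
    simpa only [show p + s + 1 = p + (s + 1) by omega] using this

private lemma sRight_mono (ii jj : ℕ → ℤ) {A B A' B' : ℕ} (hA : A ≤ A') (hB : B' ≤ B)
    (H : SRight ii jj A B) : SRight ii jj A' B' :=
  fun s h1 h2 => H s (by omega) (by omega)

private lemma sLeft_mono (ii jj : ℕ → ℤ) {A B A' B' : ℕ} (hA : A ≤ A') (hB : B' ≤ B)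
    (H : SLeft ii jj A B) : SLeft ii jj A' B' :=
  fun s h1 h2 => H s (by omega) (by omega)

private lemma not_both (ii jj : ℕ → ℤ) {A B : ℕ} (hAB : A + 1 < B)
    (h1 : SRight ii jj A B) (h2 : SLeft ii jj A B) : False := by
  have a := h1 (A + 1) le_rfl (by omega)
  have b := h2 (A + 1) le_rfl (by omega)
  omega

/-- Lemma (elemalt (i)): substrings of alternating snakes, with their induced r-vectors,
are alternating snakes; and `𝐬` is connected (resp. prime, stable) iff all its substrings
are connected (resp. prime, stable). -/
theorem stmt_1 (n r k : ℕ) (hn : 1 ≤ n) (rr : ℕ → ℕ) (ii jj : ℕ → ℤ)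
    (h : IsAltSnake n r k rr ii jj) :
    (∀ p p' m ℓ, p < p' → p' ≤ r → m < ℓ → ℓ ≤ k → rr m ≤ p + 1 → p < rr (m + 1) →
        rr (ℓ - 1) < p' → p' ≤ rr ℓ →
        ∃ k' rr', IsAltSnake n (p' - p) k' rr'
            (fun s => ii (p + s)) (fun s => jj (p + s)) ∧
          (∀ t, t ≤ k' → rr' t = 1 ∨ rr' t = p' - p ∨
              ∃ u, m + 1 ≤ u ∧ u ≤ ℓ - 1 ∧ rr' t = rr u - p) ∧
          (∀ u, m + 1 ≤ u → u ≤ ℓ - 1 → ∃ t, t ≤ k' ∧ rr' t = rr u - p)) ∧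
    (SegConnected n ii jj 0 r ↔
      ∀ p p', p < p' → p' ≤ r → SegConnected n ii jj p p') ∧
    (SegPrime n k rr ii jj 0 r ↔
      ∀ p p', p < p' → p' ≤ r → SegPrime n k rr ii jj p p') ∧
    (SegStable k rr ii jj 0 r ↔
      ∀ p p', p < p' → p' ≤ r → SegStable k rr ii jj p p') := by
  obtain ⟨hr, hk, mem, distinct, rr0, rrk, rrmono, mono, alt, nonoverlap⟩ := h
  have hrle : ∀ u v, u ≤ v → v ≤ k → rr u ≤ rr v := by
    intro u v huv hvk
    have := rr_mono_aux k rr rrmono v hvk u huv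
    omega
  have hrlt : ∀ u v, u < v → v ≤ k → rr u < rr v := by
    intro u v huv hvk
    have := rr_mono_aux k rr rrmono v hvk u (by omega)
    omega
  refine ⟨?_, ?_, ?_, ?_⟩
  · -- part (a)
    intro p p' m ℓ h1 h2 h3 h4 h5 h6 h7 h8
    have hgt : ∀ u, m + 1 ≤ u → u ≤ k → p < rr u := by
      intro u hu huk
      have := hrle (m + 1) u hu huk
      omega
    -- choose the starting run index a
    obtain ⟨a, hA⟩ : ∃ a, (a = m ∧ p + 2 ≤ p' ∧ p + 2 ≤ rr (m + 1)) ∨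
        (a = m + 1 ∧ ((ℓ = m + 1 ∧ p' = p + 1) ∨ (m + 2 ≤ ℓ ∧ rr (m + 1) = p + 1))) := by
      by_cases hc : p' - p = 1 ∨ rr (m + 1) ≤ p + 1
      · refine ⟨m + 1, Or.inr ⟨rfl, ?_⟩⟩
        rcases Nat.lt_or_ge ℓ (m + 2) with hl | hl
        · have hlm : ℓ = m + 1 := by omega
          left
          refine ⟨hlm, ?_⟩
          have e8 : p' ≤ rr (m + 1) := by rw [← hlm]; exact h8
          have := hgt (m + 1) le_rfl (by omega)
          rcases hc with hc | hc
          · -- p' - p = 1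
            omega
          · omega
        · right
          refine ⟨hl, ?_⟩
          have := hgt (m + 1) le_rfl (by omega)
          rcases hc with hc | hc
          · -- p' - p = 1 and ℓ ≥ m + 2: then rr (ℓ-1) < p' = p+1 but rr (ℓ-1) ≥ rr (m+1) > p
            have h9 := hrle (m + 1) (ℓ - 1) (by omega) (by omega)
            omega
          · omega
      · push_neg at hc
        refine ⟨m, Or.inl ⟨rfl, by omega, by have := hgt (m + 1) le_rfl (by omega); omega⟩⟩
    have ham : m ≤ a ∧ a ≤ m + 1 := by rcases hA with ⟨e, _⟩ | ⟨e, _⟩ <;> omega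
    have haℓ : a ≤ ℓ := by omega
    have hak : a + (ℓ - a) ≤ k := by omega
    have haa : 1 ≤ ℓ - a →
        (a = m ∧ p + 2 ≤ p' ∧ p + 2 ≤ rr (m + 1)) ∨
        (a = m + 1 ∧ rr (m + 1) = p + 1 ∧ m + 2 ≤ ℓ) := by
      intro hK1
      rcases hA with hA' | ⟨e, ⟨hl, _⟩ | ⟨hl, hre⟩⟩
      · exact Or.inl hA'
      · omega
      · exact Or.inr ⟨e, hre, hl⟩
    have hra : 1 ≤ ℓ - a → rr a ≤ p + 1 := by
      intro hK1
      rcases haa hK1 with ⟨e, _, _⟩ | ⟨e, hre, _⟩ <;> subst e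
      · exact h5
      · omega
    have hra2 : 1 ≤ ℓ - a → p + 2 ≤ rr (a + 1) := by
      intro hK1
      rcases haa hK1 with ⟨e, hp2, hr2⟩ | ⟨e, hre, hl2⟩ <;> subst e
      · exact hr2
      · have := hrlt (m + 1) (m + 1 + 1) (by omega) (by omega)
        omega
    have hp'2 : 1 ≤ ℓ - a → p + 2 ≤ p' := by
      intro hK1
      rcases haa hK1 with ⟨e, hp2, _⟩ | ⟨e, hre, hl2⟩ <;> subst e
      · exact hp2
      · have := hrle (m + 1) (ℓ - 1) (by omega) (by omega)
        omega
    -- the induced r-vector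
    obtain ⟨R, hR0, hRmid, hRtop⟩ :
        ∃ R : ℕ → ℕ, R 0 = 1 ∧
          (∀ t, 1 ≤ t → t ≤ ℓ - 1 - a → R t = rr (a + t) - p) ∧
          (∀ t, ℓ - 1 - a < t → 1 ≤ t → R t = p' - p) := by
      refine ⟨fun t => if t = 0 then 1 else if t ≤ ℓ - 1 - a then rr (a + t) - p else p' - p,
        rfl, ?_, ?_⟩
      · intro t h1' h2'
        simp only [if_neg (by omega : ¬ t = 0), if_pos h2']
      · intro t h1' h2'
        simp only [if_neg (by omega : ¬ t = 0), if_neg (by omega : ¬ t ≤ ℓ - 1 - a)]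
    have key : ∀ t, 1 ≤ t → t ≤ ℓ - a →
        rr (a + t - 1) ≤ p + R (t - 1) ∧ p + R t ≤ rr (a + t) ∧ R (t - 1) < R t := by
      intro t ht1 htK
      have hK1 : 1 ≤ ℓ - a := by omega
      rcases Nat.lt_or_ge t 2 with h2t | h2t
      · have ht : t = 1 := by omega
        subst ht
        have hL : rr a ≤ p + R 0 := by rw [hR0]; exact hra hK1
        rcases le_or_gt 1 (ℓ - 1 - a) with hmid | htop
        · have hRv : R 1 = rr (a + 1) - p := hRmid 1 le_rfl hmid
          have hg := hgt (a + 1) (by omega) (by omega)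
          have hm2 := hra2 hK1
          refine ⟨hL, ?_, ?_⟩ <;> rw [hRv] <;> [omega; skip]
          rw [hR0]; omega
        · have hℓ : ℓ = a + 1 := by omega
          have hRv : R 1 = p' - p := hRtop 1 (by omega) le_rfl
          have e8 : p' ≤ rr (a + 1) := by rw [← hℓ]; exact h8
          have hp2 := hp'2 hK1
          refine ⟨hL, ?_, ?_⟩ <;> rw [hRv]
          · omega
          · rw [hR0]; omega
      · -- t ≥ 2
        have hRt1 : R (t - 1) = rr (a + t - 1) - p := by
          rw [hRmid (t - 1) (by omega) (by omega)]
          congr 2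
          omega
        have hg1 := hgt (a + t - 1) (by omega) (by omega)
        rcases le_or_gt t (ℓ - 1 - a) with hmid | htop
        · have hRv : R t = rr (a + t) - p := hRmid t (by omega) hmid
          have hg := hgt (a + t) (by omega) (by omega)
          have hst := hrlt (a + t - 1) (a + t) (by omega) (by omega)
          refine ⟨by rw [hRt1]; omega, by rw [hRv]; omega, by rw [hRt1, hRv]; omega⟩
        · have hteq : t = ℓ - a := by omega
          have hRv : R t = p' - p := hRtop t htop (by omega)
          have e2 : a + t = ℓ := by omega
          have e8 : p' ≤ rr (a + t) := by rw [e2]; exact h8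
          have e7 : rr (a + t - 1) < p' := by
            have e3 : a + t - 1 = ℓ - 1 := by omega
            rw [e3]; exact h7
          refine ⟨by rw [hRt1]; omega, by rw [hRv]; omega, by rw [hRt1, hRv]; omega⟩
    have Rmono : ∀ t, t < ℓ - a → R t < R (t + 1) := by
      intro t ht
      have := (key (t + 1) (by omega) (by omega)).2.2
      simpa using this
    have hK1 : ∀ t, t ≤ ℓ - a → t + 1 ≤ R t := by
      intro t htK
      have := rr_mono_aux (ℓ - a) R Rmono t htK 0 (by omega)
      omega
    have hRK : R (ℓ - a) = p' - p := by
      rcases Nat.eq_zero_or_pos (ℓ - a) with hK | hK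
      · rw [hK, hR0]
        rcases hA with ⟨e, _, _⟩ | ⟨e, ⟨hl, hp⟩ | ⟨hl, _⟩⟩ <;> omega
      · exact hRtop (ℓ - a) (by omega) (by omega)
    have bridgeR : ∀ t, 1 ≤ t → t ≤ ℓ - a →
        (SRight (fun s => ii (p + s)) (fun s => jj (p + s)) (R (t - 1) - 1) (R t)
          ↔ SRight ii jj (rr (a + t - 1) - 1) (rr (a + t))) := by
      intro t ht1 htK
      obtain ⟨kL, kU, kM⟩ := key t ht1 htK
      have hR1 : 1 ≤ R (t - 1) := by have := hK1 (t - 1) (by omega); omega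
      constructor
      · intro H
        rcases mono (a + t) (by omega) (by omega) with hm | hm
        · exact hm
        · exfalso
          have hm' : SLeft ii jj (p + (R (t - 1) - 1)) (p + R t) :=
            sLeft_mono ii jj (by omega) (by omega) hm
          exact not_both _ _ (by omega : R (t - 1) - 1 + 1 < R t) H
            ((sLeft_shift ii jj p _ _).mpr hm')
      · intro H
        exact (sRight_shift ii jj p _ _).mpr (sRight_mono ii jj (by omega) (by omega) H)
    have bridgeL : ∀ t, 1 ≤ t → t ≤ ℓ - a →
        (SLeft (fun s => ii (p + s)) (fun s => jj (p + s)) (R (t - 1) - 1) (R t)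
          ↔ SLeft ii jj (rr (a + t - 1) - 1) (rr (a + t))) := by
      intro t ht1 htK
      obtain ⟨kL, kU, kM⟩ := key t ht1 htK
      have hR1 : 1 ≤ R (t - 1) := by have := hK1 (t - 1) (by omega); omega
      constructor
      · intro H
        rcases mono (a + t) (by omega) (by omega) with hm | hm
        · exfalso
          have hm' : SRight ii jj (p + (R (t - 1) - 1)) (p + R t) :=
            sRight_mono ii jj (by omega) (by omega) hm
          exact not_both _ _ (by omega : R (t - 1) - 1 + 1 < R t)
            ((sRight_shift ii jj p _ _).mpr hm') H
        · exact hm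
      · intro H
        exact (sLeft_shift ii jj p _ _).mpr (sLeft_mono ii jj (by omega) (by omega) H)
    refine ⟨ℓ - a, R, ?_, ?_, ?_⟩
    · refine ⟨by omega, ?_, ?_, ?_, hR0, hRK, Rmono, ?_, ?_, ?_⟩
      · -- hk : ℓ - a ≤ p' - p
        have := hK1 (ℓ - a) le_rfl
        omega
      · intro s hs1 hs2
        exact mem (p + s) (by omega) (by omega)
      · intro s q hs1 hs2 hq1 hq2 hne
        exact distinct (p + s) (p + q) (by omega) (by omega) (by omega) (by omega) (by omega)
      · intro t ht1 htK
        rcases mono (a + t) (by omega) (by omega) with hm | hm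
        · exact Or.inl ((bridgeR t ht1 htK).mpr hm)
        · exact Or.inr ((bridgeL t ht1 htK).mpr hm)
      · intro t ht1 htK
        constructor
        · intro H
          have h1' := (bridgeR t ht1 (by omega)).mp H
          have h2' := (alt (a + t) (by omega) (by omega)).mp h1'
          exact (bridgeL (t + 1) (by omega) (by omega)).mpr h2'
        · intro H
          have h1' := (bridgeL (t + 1) (by omega) (by omega)).mp H
          have h2' := (alt (a + t) (by omega) (by omega)).mpr h1'
          exact (bridgeR t ht1 (by omega)).mpr h2'
      · intro t s q ht1 htK hs1 hs2 hq1 hq2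
        have hRv : R t = rr (a + t) - p := hRmid t ht1 (by omega)
        have hg := hgt (a + t) (by omega) (by omega)
        exact nonoverlap (a + t) (p + s) (p + q) (by omega) (by omega) (by omega)
          (by omega) (by omega) (by omega)
    · intro t htK
      rcases Nat.eq_zero_or_pos t with h0 | h0
      · subst h0; exact Or.inl hR0
      rcases le_or_gt t (ℓ - 1 - a) with hmid | htop
      · exact Or.inr (Or.inr ⟨a + t, by omega, by omega, hRmid t h0 hmid⟩)
      · exact Or.inr (Or.inl (hRtop t htop h0))
    · intro u hu1 hu2
      have hl2 : m + 2 ≤ ℓ := by omega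
      rcases hA with ⟨e, hp2, hr2⟩ | ⟨e, ⟨hl, _⟩ | ⟨hl, hre⟩⟩
      · refine ⟨u - a, by omega, ?_⟩
        rw [hRmid (u - a) (by omega) (by omega)]
        congr 2
        omega
      · omega
      · rcases Nat.eq_or_lt_of_le hu1 with he | hlt
        · refine ⟨0, by omega, ?_⟩
          rw [hR0, ← he, hre]
          omega
        · refine ⟨u - (m + 1), by omega, ?_⟩
          rw [hRmid (u - (m + 1)) (by omega) (by omega)]
          congr 2
          omega
  · -- connected
    constructor
    · intro H p p' hpp' hp'r s hs1 hs2
      exact H s (by omega) (by omega)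
    · intro H
      exact H 0 r hr le_rfl
  · -- prime
    constructor
    · rintro ⟨Hc, Hp⟩ p p' hpp' hp'r
      exact ⟨fun s hs1 hs2 => Hc s (by omega) (by omega),
        fun m h1 h2 h3 h4 => Hp m h1 h2 (by omega) (by omega)⟩
    · intro H
      exact H 0 r hr le_rfl
  · -- stable
    constructor
    · intro H p p' hpp' hp'r m h1 h2 h3 h4
      exact H m h1 h2 (by omega) (by omega)
    · intro H
      exact H 0 r hr le_rfl

end AltSnakePaper
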